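/- arXiv:0811.4101 — 2 statements merged into one kernel-verified Lean document; each statement's English description precedes it below -/
import Mathlib

section
/- Let G be a compactly generated totally disconnected locally compact Hausdorff group which is quasi-discrete. Then the compact open normal subgroups of G form a basis of identity neighbourhoods; in particular, every compact open subgroup of G contains a compact open normal subgroup of G. -/
open scoped Pointwise Topology

open Set

section Aux

variable {G : Type*} [Group G] [TopologicalSpace G] [IsTopologicalGroup G]

/-- Variant of `TopologicalGroup.exist_mul_closure_nhd` for a compact open `W`
in a not-necessarily-compact group. -/
lemma aux_exist_mul_closure_nhd {W : Set G} (Wc : IsCompact W) (Wo : IsOpen W) :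
    ∃ T ∈ 𝓝 (1 : G), W * T ⊆ W := by
  apply Wc.induction_on (p := fun S ↦ ∃ T ∈ 𝓝 (1 : G), S * T ⊆ W)
    ⟨Set.univ, by simp only [Filter.univ_mem, Set.empty_mul, Set.empty_subset, and_self]⟩
    (fun _ _ huv ⟨T, hT, mem⟩ ↦ ⟨T, hT, (Set.mul_subset_mul_right huv).trans mem⟩)
    fun U V ⟨T₁, hT₁, mem1⟩ ⟨T₂, hT₂, mem2⟩ ↦ ⟨T₁ ∩ T₂, Filter.inter_mem hT₁ hT₂, by
      rw [Set.union_mul]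
      exact Set.union_subset ((Set.mul_subset_mul_left Set.inter_subset_left).trans mem1)
        ((Set.mul_subset_mul_left Set.inter_subset_right).trans mem2)⟩
  intro x memW
  have : (x, 1) ∈ (fun p : G × G ↦ p.1 * p.2) ⁻¹' W := by simp [memW]
  rcases isOpen_prod_iff.mp (continuous_mul.isOpen_preimage W Wo) x 1 this with
    ⟨U, V, Uopen, Vopen, xmemU, onememV, prodsub⟩
  have h6 : U * V ⊆ W := Set.mul_subset_iff.mpr (fun _ hx _ hy ↦ prodsub (Set.mk_mem_prod hx hy))
  exact ⟨U ∩ W, ⟨U, Uopen.mem_nhds xmemU, W, fun _ a ↦ a, rfl⟩,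
    V, Vopen.mem_nhds onememV, fun _ a ↦ h6 ((Set.mul_subset_mul_right Set.inter_subset_left) a)⟩

/-- Van Dantzig: a compact open subgroup inside any clopen compact neighbourhood of 1. -/
lemma aux_vanDantzig [LocallyCompactSpace G] [T2Space G] [TotallyDisconnectedSpace G]
    {U : Set G} (hU : U ∈ 𝓝 (1 : G)) :
    ∃ V : Subgroup G, IsCompact (V : Set G) ∧ IsOpen (V : Set G) ∧ (V : Set G) ⊆ U := by
  obtain ⟨K, hK, hKU, hKc⟩ := local_compact_nhds hU
  obtain ⟨W, hWclopen, h1W, hWK⟩ :=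
    (loc_compact_Haus_tot_disc_of_zero_dim (H := G)).mem_nhds_iff.mp
      (interior_mem_nhds.mpr hK)
  have Wc : IsCompact W := hKc.of_isClosed_subset (hWclopen : IsClopen W).isClosed
    (hWK.trans interior_subset)
  obtain ⟨T0, hT0, hmul⟩ := aux_exist_mul_closure_nhd Wc hWclopen.isOpen
  rcases mem_nhds_iff.mp hT0 with ⟨U0, U0subT, U0open, onememU0⟩
  set V : Set G := U0 ∩ U0⁻¹ with hVdef
  have hVnhd : V ∈ 𝓝 (1 : G) := by
    simp [hVdef, Filter.inter_mem (U0open.mem_nhds onememU0) (inv_mem_nhds_one G (U0open.mem_nhds onememU0))]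
  have hVinv : V⁻¹ = V := by simp [hVdef, Set.inter_comm]
  have hVopen : IsOpen V := U0open.inter U0open.inv
  have hVmul : W * V ⊆ W := fun a ha ↦ hmul (Set.mul_subset_mul_left U0subT
    (Set.mul_subset_mul_left Set.inter_subset_left ha))
  let S : Subgroup G :=
  { carrier := ⋃ n, V ^ (n + 1)
    mul_mem' := fun ha hb ↦ by
      rcases Set.mem_iUnion.mp ha with ⟨k, hk⟩
      rcases Set.mem_iUnion.mp hb with ⟨l, hl⟩
      apply Set.mem_iUnion.mpr
      exact ⟨k + 1 + l, by rw [add_assoc, pow_add]; exact Set.mul_mem_mul hk hl⟩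
    one_mem' := by
      apply Set.mem_iUnion.mpr
      exact ⟨0, by simpa using mem_of_mem_nhds hVnhd⟩
    inv_mem' := fun ha ↦ by
      rcases Set.mem_iUnion.mp ha with ⟨k, hk⟩
      apply Set.mem_iUnion.mpr
      refine ⟨k, ?_⟩
      rw [← hVinv]
      simpa only [inv_pow, Set.mem_inv, inv_inv] using hk }
  have Sopen : IsOpen (S : Set G) := by
    refine isOpen_iUnion fun n ↦ ?_
    rw [pow_succ]
    exact hVopen.mul_left
  have mulVpow : ∀ n : ℕ, W * V ^ (n + 1) ⊆ W := by
    intro n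
    induction' n with n ih
    · simpa using hVmul
    · rw [pow_succ, ← mul_assoc]
      exact (Set.mul_subset_mul_right ih).trans hVmul
  have hsub : (S : Set G) ⊆ W := by
    refine Set.iUnion_subset fun i a ha ↦ mulVpow i ?_
    rw [Set.mem_mul]
    exact ⟨1, h1W, a, ha, one_mul a⟩
  refine ⟨S, Wc.of_isClosed_subset (S.isClosed_of_isOpen Sopen) hsub, Sopen,
    hsub.trans ((hWK.trans interior_subset).trans hKU)⟩



lemma aux_core (hcg : ∃ S : Set G, IsCompact S ∧ Subgroup.closure S = ⊤)
    (hqd : Dense {x : G | IsOpen ((Subgroup.centralizer {x} : Subgroup G) : Set G)})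
    (U : Subgroup G) (Uc : IsCompact (U : Set G)) (Uo : IsOpen (U : Set G)) :
    ∃ V : Subgroup G, V.Normal ∧ IsCompact (V : Set G) ∧ IsOpen (V : Set G) ∧ V ≤ U := by
  classical
  obtain ⟨S, Sc, Stop⟩ := hcg
  have key : ∀ g : G, ∃ z : G,
      IsOpen ((Subgroup.centralizer {z} : Subgroup G) : Set G) ∧ z ∈ g • (U : Set G) := by
    intro g
    obtain ⟨z, hz1, hz2⟩ := hqd.exists_mem_open (Uo.smul g)
      ⟨g, Set.mem_smul_set.mpr ⟨1, U.one_mem, by simp⟩⟩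
    exact ⟨z, hz1, hz2⟩
  choose y hyopen hymem using key
  obtain ⟨t, ht⟩ := Sc.elim_finite_subcover (fun g : G => g • (U : Set G))
    (fun g => Uo.smul g) (fun s _ => Set.mem_iUnion.mpr
      ⟨s, Set.mem_smul_set.mpr ⟨1, U.one_mem, by simp⟩⟩)
  set W : Subgroup G := U ⊓ ⨅ g ∈ t, Subgroup.centralizer {y g} with hW
  have Wle : W ≤ U := inf_le_left
  have Wcent : ∀ g ∈ t, W ≤ Subgroup.centralizer {y g} := fun g hg =>
    inf_le_right.trans (iInf₂_le g hg)
  have Wo : IsOpen (W : Set G) := by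
    have hWs : (W : Set G)
        = (U : Set G) ∩ ⋂ g ∈ t, ((Subgroup.centralizer {y g} : Subgroup G) : Set G) := by
      simp [hW, Subgroup.coe_iInf]
    rw [hWs]
    exact Uo.inter (isOpen_biInter_finset fun g _ => hyopen g)
  have Wc : IsCompact (W : Set G) :=
    Uc.of_isClosed_subset (W.isClosed_of_isOpen Wo) Wle
  obtain ⟨R, hR⟩ := Uc.elim_finite_subcover (fun u : ↥U => (u : G) • (W : Set G))
    (fun u => Wo.smul _) (fun a ha => Set.mem_iUnion.mpr
      ⟨⟨a, ha⟩, Set.mem_smul_set.mpr ⟨1, W.one_mem, by simp⟩⟩)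
  set C : ↥U → Subgroup G := fun r => W.map (MulAut.conj (r : G)).toMonoidHom with hC
  have memC : ∀ (r : ↥U) (g : G), g ∈ C r ↔ (r : G)⁻¹ * g * (r : G) ∈ W := by
    intro r g
    rw [hC]
    rw [Subgroup.mem_map_equiv, MulAut.conj_symm_apply]
  set R' : Finset ↥U := insert 1 R with hR'
  set V : Subgroup G := ⨅ r ∈ R', C r with hV
  have VleC : ∀ r ∈ R', V ≤ C r := fun r hr => iInf₂_le r hr
  have VleW : V ≤ W := by
    have h1 : C (1 : ↥U) = W := by
      ext g; rw [memC]; simp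
    exact h1 ▸ VleC 1 (Finset.mem_insert_self 1 R)
  have Vo : IsOpen (V : Set G) := by
    have hVs : (V : Set G) = ⋂ r ∈ R', ((C r : Subgroup G) : Set G) := by
      simp [hV, Subgroup.coe_iInf]
    rw [hVs]
    refine isOpen_biInter_finset fun r _ => ?_
    have himg : ((C r : Subgroup G) : Set G)
        = ((Homeomorph.mulLeft (r : G)).trans (Homeomorph.mulRight (r : G)⁻¹)) '' (W : Set G) := by
      ext g
      simp [hC, Homeomorph.trans_apply, MulAut.conj_apply, Subgroup.mem_map]
    rw [himg]
    exact ((Homeomorph.mulLeft _).trans (Homeomorph.mulRight _)).isOpenMap _ Wo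
  have VleU : V ≤ U := VleW.trans Wle
  have Vc : IsCompact (V : Set G) :=
    Uc.of_isClosed_subset (V.isClosed_of_isOpen Vo) VleU
  have claimB : ∀ p ∈ U, ∀ v ∈ V, p * v * p⁻¹ ∈ W := by
    intro p hp v hv
    have hpinv : p⁻¹ ∈ ⋃ r ∈ R, (r : ↥U) • (W : Set G) := by
      have := hR (U.inv_mem hp)
      simpa using this
    rcases Set.mem_iUnion₂.mp hpinv with ⟨r, hrR, hmem⟩
    rcases Set.mem_smul_set.mp hmem with ⟨w, hw, hrw⟩
    have hvr : (r : G)⁻¹ * v * (r : G) ∈ W :=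
      (memC r v).mp (VleC r (Finset.mem_insert_of_mem hrR) hv)
    have hp' : p = w⁻¹ * (r : G)⁻¹ := by
      have : (r : G) * w = p⁻¹ := hrw
      rw [← inv_inv p, ← this]; group
    have heq : p * v * p⁻¹ = w⁻¹ * ((r : G)⁻¹ * v * (r : G)) * w := by
      rw [hp']; group
    rw [heq]
    exact W.mul_mem (W.mul_mem (W.inv_mem hw) hvr) hw
  have claimA : ∀ u ∈ U, ∀ v ∈ V, u * v * u⁻¹ ∈ V := by
    intro u hu v hv
    rw [hV]
    refine Subgroup.mem_iInf.mpr fun r => Subgroup.mem_iInf.mpr fun hr => ?_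
    rw [memC]
    have heq : (r : G)⁻¹ * (u * v * u⁻¹) * (r : G)
        = ((r : G)⁻¹ * u) * v * ((r : G)⁻¹ * u)⁻¹ := by group
    rw [heq]
    exact claimB _ (U.mul_mem (U.inv_mem r.2) hu) v hv
  have hnormalizer : ∀ u ∈ U, u ∈ Subgroup.normalizer (V : Set G) := by
    intro u hu
    refine Subgroup.mem_normalizer_iff.mpr fun h => ⟨fun hh => claimA u hu h hh, fun hh => ?_⟩
    have h1 := claimA u⁻¹ (U.inv_mem hu) _ hh
    have h2 : u⁻¹ * (u * h * u⁻¹) * u⁻¹⁻¹ = h := by group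
    rwa [h2] at h1
  have hxnorm : ∀ g ∈ t, y g ∈ Subgroup.normalizer (V : Set G) := by
    intro g hg
    refine Subgroup.mem_normalizer_iff.mpr fun h => ⟨fun hh => ?_, fun hh => ?_⟩
    · have hc : h ∈ Subgroup.centralizer {y g} := Wcent g hg (VleW hh)
      have hcomm := Subgroup.mem_centralizer_iff.mp hc (y g) rfl
      have heq : y g * h * (y g)⁻¹ = h := by
        rw [hcomm]; group
      rwa [heq]
    · have hc : (y g * h * (y g)⁻¹) ∈ Subgroup.centralizer {y g} := Wcent g hg (VleW hh)
      have hcomm := Subgroup.mem_centralizer_iff.mp hc (y g) rfl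
      have h1 : y g * (y g * h * (y g)⁻¹) = y g * h := by
        rw [hcomm]; group
      have h2 : y g * h * (y g)⁻¹ = h := mul_left_cancel h1
      rwa [← h2]
  have hgen : Subgroup.closure ((U : Set G) ∪ (y '' ↑t)) = ⊤ := by
    rw [eq_top_iff, ← Stop]
    apply (Subgroup.closure_le _).mpr
    intro s hs
    rcases Set.mem_iUnion₂.mp (ht hs) with ⟨g, hg, hmem⟩
    rcases Set.mem_smul_set.mp hmem with ⟨u, hu, hgu⟩
    rcases Set.mem_smul_set.mp (hymem g) with ⟨u₀, hu₀, hgu₀⟩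
    have hs' : s = y g * (u₀⁻¹ * u) := by
      have e1 : g * u = s := hgu
      have e2 : g * u₀ = y g := hgu₀
      rw [← e1, ← e2]; group
    rw [hs']
    exact Subgroup.mul_mem _ (Subgroup.subset_closure (Or.inr ⟨g, hg, rfl⟩))
      (Subgroup.subset_closure (Or.inl (U.mul_mem (U.inv_mem hu₀) hu)))
  have hnormal : V.Normal := by
    rw [← Subgroup.normalizer_eq_top_iff, eq_top_iff, ← hgen]
    apply (Subgroup.closure_le _).mpr
    rintro a (ha | ⟨g, hg, rfl⟩)
    · exact hnormalizer a ha
    · exact hxnorm g hg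
  exact ⟨V, hnormal, Vc, Vo, VleU⟩

end Aux

/-- A topological group is *compactly generated* if it is generated, as a group,
by some compact subset. -/
def CompactlyGeneratedGroup (G : Type*) [Group G] [TopologicalSpace G] : Prop :=
  ∃ S : Set G, IsCompact S ∧ Subgroup.closure S = ⊤

/-- A topological group is *topologically simple* if it is non-trivial and its only
closed normal subgroups are the trivial subgroup and the whole group. -/
def IsTopologicallySimple (G : Type*) [Group G] [TopologicalSpace G] : Prop :=
  Nontrivial G ∧ ∀ H : Subgroup G, H.Normal → IsClosed (H : Set G) → H = ⊥ ∨ H = ⊤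

/-- Two topological groups are *topologically isomorphic* if there is a group
isomorphism between them which is also a homeomorphism. -/
def TopIsomorphic (G H : Type*) [Group G] [TopologicalSpace G] [Group H]
    [TopologicalSpace H] : Prop :=
  ∃ e : G ≃* H, Continuous e ∧ Continuous e.symm

/-- `G` is a quasi-product with quasi-factors `N 0, …, N (p-1)` if these are closed
normal subgroups of `G` such that the multiplication map `N 0 × ⋯ × N (p-1) → G`
is injective with dense image. -/
def IsQuasiProduct {G : Type*} [Group G] [TopologicalSpace G] {p : ℕ}
    (N : Fin p → Subgroup G) : Prop :=
  (∀ i, (N i).Normal) ∧ (∀ i, IsClosed ((N i) : Set G)) ∧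
  Function.Injective (fun x : (∀ i, ↥(N i)) => (List.ofFn fun i => (x i : G)).prod) ∧
  DenseRange (fun x : (∀ i, ↥(N i)) => (List.ofFn fun i => (x i : G)).prod)

/-- **Proposition (Barnea–Ershov–Weigel; Caprace–Monod).** In any quasi-discrete
compactly generated totally disconnected locally compact Hausdorff group, the
compact open normal subgroups form a basis of identity neighbourhoods; in
particular every compact open subgroup contains a compact open normal subgroup. -/
theorem quasi_discrete_basis (G : Type*) [Group G] [TopologicalSpace G]
    [IsTopologicalGroup G] [LocallyCompactSpace G] [T2Space G]
    [TotallyDisconnectedSpace G]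
    (hcg : CompactlyGeneratedGroup G)
    (hqd : Dense {x : G | IsOpen ((Subgroup.centralizer {x} : Subgroup G) : Set G)}) :
    (∀ U ∈ nhds (1 : G), ∃ V : Subgroup G, V.Normal ∧ IsCompact (V : Set G) ∧
      IsOpen (V : Set G) ∧ (V : Set G) ⊆ U) ∧
    (∀ U : Subgroup G, IsCompact (U : Set G) → IsOpen (U : Set G) →
      ∃ V : Subgroup G, V.Normal ∧ IsCompact (V : Set G) ∧ IsOpen (V : Set G) ∧
        V ≤ U) := by
  have main := aux_core (G := G) hcg hqd
  refine ⟨?_, fun U hUc hUo => main U hUc hUo⟩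
  intro U hU
  obtain ⟨U', hU'c, hU'o, hU'sub⟩ := aux_vanDantzig hU
  obtain ⟨V, hVn, hVc, hVo, hVle⟩ := main U' hU'c hU'o
  exact ⟨V, hVn, hVc, hVo, fun a ha => hU'sub (hVle ha)⟩
end

section
/- Let G be a totally disconnected compactly generated non-compact locally compact Hausdorff group. Then there exists a closed normal subgroup N of G such that the quotient group G/N is non-compact and every non-trivial closed normal subgroup of G/N is cocompact in G/N. -/
open scoped Pointwise Topology

section Aux

open Set

variable {G : Type*} [Group G] [TopologicalSpace G] [IsTopologicalGroup G]

private lemma JNC.coe_mul_coe_self (N : Subgroup G) : (N : Set G) * (N : Set G) = (N : Set G) := by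
  apply subset_antisymm
  · rintro x ⟨a, ha, b, hb, rfl⟩
    exact mul_mem ha hb
  · intro x hx
    exact ⟨x, hx, 1, N.one_mem, mul_one x⟩

private lemma JNC.normal_comm {N : Subgroup G} (hN : N.Normal) (A : Set G) :
    (N : Set G) * A = A * (N : Set G) := by
  ext x
  constructor
  · rintro ⟨n, hn, a, ha, rfl⟩
    exact ⟨a, ha, a⁻¹ * n * a, hN.conj_mem' n hn a, by group⟩
  · rintro ⟨a, ha, n, hn, rfl⟩
    exact ⟨a * n * a⁻¹, hN.conj_mem n hn a, a, ha, by group⟩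

private lemma JNC.isCompact_pow {V : Set G} (hVc : IsCompact V) : ∀ k, IsCompact (V ^ k)
  | 0 => by rw [pow_zero, ← Set.singleton_one]; exact isCompact_singleton
  | (k + 1) => by
      rw [pow_succ]
      exact (JNC.isCompact_pow hVc k).mul hVc

private lemma JNC.exist_mul_closure_nhd {W : Set G} (Wcomp : IsCompact W) (Wopen : IsOpen W) :
    ∃ T ∈ 𝓝 (1 : G), W * T ⊆ W := by
  apply Wcomp.induction_on (p := fun S ↦ ∃ T ∈ 𝓝 (1 : G), S * T ⊆ W)
    ⟨Set.univ, by simp only [Filter.univ_mem, Set.empty_mul, Set.empty_subset, and_self]⟩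
    (fun _ _ huv ⟨T, hT, mem⟩ ↦ ⟨T, hT, (Set.mul_subset_mul_right huv).trans mem⟩)
    (fun U V ⟨T₁, hT₁, mem1⟩ ⟨T₂, hT₂, mem2⟩ ↦ ⟨T₁ ∩ T₂, Filter.inter_mem hT₁ hT₂, by
      rw [Set.union_mul]
      exact Set.union_subset (Set.mul_subset_mul_left Set.inter_subset_left |>.trans mem1)
        (Set.mul_subset_mul_left Set.inter_subset_right |>.trans mem2)⟩)
  intro x memW
  have : (x, 1) ∈ (fun p : G × G ↦ p.1 * p.2) ⁻¹' W := by simp [memW]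
  rcases isOpen_prod_iff.mp (continuous_mul.isOpen_preimage W Wopen) x 1 this with
    ⟨U, V, Uopen, Vopen, xmemU, onememV, prodsub⟩
  have h6 : U * V ⊆ W := Set.mul_subset_iff.mpr fun _ hx _ hy ↦ prodsub (Set.mk_mem_prod hx hy)
  exact ⟨U ∩ W, ⟨U, Uopen.mem_nhds xmemU, W, fun _ a ↦ a, rfl⟩,
    V, Vopen.mem_nhds onememV, fun _ a ↦ h6 ((Set.mul_subset_mul_right Set.inter_subset_left) a)⟩

/-- **van Dantzig's theorem**: a totally disconnected locally compact Hausdorff group has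
a compact open subgroup. -/
private lemma JNC.exists_compact_open_subgroup [T2Space G] [LocallyCompactSpace G]
    [TotallyDisconnectedSpace G] :
    ∃ U : Subgroup G, IsCompact (U : Set G) ∧ IsOpen (U : Set G) := by
  obtain ⟨C, hC1, -, hCc⟩ :=
    LocallyCompactSpace.local_compact_nhds (1 : G) Set.univ Filter.univ_mem
  have h1int : (1 : G) ∈ interior C := mem_interior_iff_mem_nhds.mpr hC1
  obtain ⟨W, WClopen, einW, hWC⟩ :=
    loc_compact_Haus_tot_disc_of_zero_dim.exists_subset_of_mem_open h1int isOpen_interior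
  have Wcomp : IsCompact W :=
    hCc.of_isClosed_subset WClopen.isClosed (hWC.trans interior_subset)
  obtain ⟨T, Tnhds, hmul⟩ := JNC.exist_mul_closure_nhd Wcomp WClopen.isOpen
  rcases mem_nhds_iff.mp Tnhds with ⟨U0, U0subT, U0open, onememU0⟩
  have Vnhd1 : (1 : G) ∈ U0 ∩ U0⁻¹ := ⟨onememU0, by simpa using onememU0⟩
  set V := U0 ∩ U0⁻¹ with hV
  have Vopen : IsOpen V := U0open.inter U0open.inv
  have VsubT : V ⊆ T := fun x hx => U0subT hx.1
  let H : Subgroup G :=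
    { carrier := ⋃ n, V ^ (n + 1)
      mul_mem' := fun ha hb ↦ by
        rcases Set.mem_iUnion.mp ha with ⟨k, hk⟩
        rcases Set.mem_iUnion.mp hb with ⟨l, hl⟩
        apply Set.mem_iUnion.mpr
        use k + 1 + l
        rw [add_assoc, pow_add]
        exact Set.mul_mem_mul hk hl
      one_mem' := by
        apply Set.mem_iUnion.mpr
        use 0
        simpa using Vnhd1
      inv_mem' := fun ha ↦ by
        rcases Set.mem_iUnion.mp ha with ⟨k, hk⟩
        apply Set.mem_iUnion.mpr
        use k
        have hVinv : V⁻¹ = V := by rw [hV]; simp [Set.inter_comm]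
        rw [← hVinv]
        simpa only [inv_pow, Set.mem_inv, inv_inv] using hk }
  have Hopen : IsOpen (H : Set G) := by
    refine isOpen_iUnion fun n ↦ ?_
    rw [pow_succ]
    exact Vopen.mul_left
  have WmulV : ∀ n, W * V ^ (n + 1) ⊆ W := by
    intro n
    induction n with
    | zero => simpa [pow_one] using (Set.mul_subset_mul_left VsubT).trans hmul
    | succ n ih =>
        rw [pow_succ, ← mul_assoc]
        exact (Set.mul_subset_mul_right ih).trans ((Set.mul_subset_mul_left VsubT).trans hmul)
  have HsubW : (H : Set G) ⊆ W :=
    Set.iUnion_subset fun n x hx => WmulV n ⟨1, einW, x, hx, one_mul x⟩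
  exact ⟨H, Wcomp.of_isClosed_subset (H.isClosed_of_isOpen Hopen) HsubW, Hopen⟩

private lemma JNC.exists_mem_pow {V : Set G} (hV1 : (1 : G) ∈ V) (hVs : V⁻¹ = V)
    (hVg : Subgroup.closure V = ⊤) (g : G) : ∃ k, g ∈ V ^ k := by
  have hg : g ∈ Subgroup.closure V := hVg ▸ Subgroup.mem_top g
  refine Subgroup.closure_induction (p := fun x _ => ∃ k, x ∈ V ^ k)
    (fun x hx => ⟨1, by simpa [pow_one] using hx⟩)
    ⟨0, by rw [pow_zero, ← Set.singleton_one]; exact Set.mem_singleton 1⟩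
    (fun x y _ _ ⟨k, hk⟩ ⟨l, hl⟩ => ⟨k + l, by rw [pow_add]; exact Set.mul_mem_mul hk hl⟩)
    (fun x _ ⟨k, hk⟩ => ⟨k, by rw [← hVs, inv_pow]; exact Set.inv_mem_inv.mpr hk⟩) hg

private lemma JNC.compactSpace_quotient_iff {V : Set G} (hVo : IsOpen V) (hVc : IsCompact V)
    (hV1 : (1 : G) ∈ V) (hVs : V⁻¹ = V) (hVg : Subgroup.closure V = ⊤) (N : Subgroup G) :
    CompactSpace (G ⧸ N) ↔ ∃ k, V ^ k * (N : Set G) = Set.univ := by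
  constructor
  · intro h
    have hcov : (Set.univ : Set (G ⧸ N)) ⊆
        ⋃ k : ℕ, (QuotientGroup.mk '' (V ^ (k + 1)) : Set (G ⧸ N)) := by
      rintro x -
      obtain ⟨g, rfl⟩ := QuotientGroup.mk_surjective x
      obtain ⟨k, hk⟩ := JNC.exists_mem_pow hV1 hVs hVg g
      exact Set.mem_iUnion.mpr
        ⟨k, ⟨g, Set.pow_subset_pow_right hV1 (Nat.le_succ k) hk, rfl⟩⟩
    obtain ⟨k, hk⟩ := isCompact_univ.elim_directed_cover
      (fun k : ℕ => (QuotientGroup.mk '' (V ^ (k + 1)) : Set (G ⧸ N)))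
      (fun k => QuotientGroup.isOpenMap_coe _ (by rw [pow_succ]; exact hVo.mul_left))
      hcov
      (fun i j => ⟨max i j,
        Set.image_mono (Set.pow_subset_pow_right hV1 (by omega)),
        Set.image_mono (Set.pow_subset_pow_right hV1 (by omega))⟩)
    refine ⟨k + 1, Set.eq_univ_of_forall fun g => ?_⟩
    obtain ⟨v, hv, hvg⟩ := hk (Set.mem_univ ((g : G ⧸ N)))
    have hmem : v⁻¹ * g ∈ N := QuotientGroup.eq.mp hvg
    exact ⟨v, hv, v⁻¹ * g, hmem, by group⟩
  · rintro ⟨k, hk⟩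
    have himg : QuotientGroup.mk '' (V ^ k) = (Set.univ : Set (G ⧸ N)) := by
      refine Set.eq_univ_of_forall fun x => ?_
      obtain ⟨g, rfl⟩ := QuotientGroup.mk_surjective x
      have hg : g ∈ V ^ k * (N : Set G) := hk ▸ Set.mem_univ g
      obtain ⟨v, hv, n, hn, rfl⟩ := hg
      exact ⟨v, hv, (QuotientGroup.eq.mpr (by simpa using hn)).symm⟩
    exact ⟨himg ▸ (JNC.isCompact_pow hVc k).image QuotientGroup.continuous_mk⟩

end Aux

/-- **Proposition (Grigorchuk–Willis).** Every totally disconnected compactly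
generated non-compact locally compact Hausdorff group admits a non-compact
quotient all of whose non-trivial closed normal subgroups are cocompact. -/
theorem exists_just_non_compact_quotient (G : Type*) [Group G] [TopologicalSpace G]
    [IsTopologicalGroup G] [LocallyCompactSpace G] [T2Space G]
    [TotallyDisconnectedSpace G]
    (hcg : CompactlyGeneratedGroup G) (hnc : ¬ CompactSpace G) :
    ∃ N : Subgroup G, ∃ hN : N.Normal, IsClosed (N : Set G) ∧
      ¬ CompactSpace (G ⧸ N) ∧
      (haveI := hN;
        ∀ K : Subgroup (G ⧸ N), K.Normal → IsClosed (K : Set (G ⧸ N)) → K ≠ ⊥ →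
          CompactSpace ((G ⧸ N) ⧸ K)) := by
  classical
  obtain ⟨U, hUcomp, hUopen⟩ := JNC.exists_compact_open_subgroup (G := G)
  obtain ⟨S, hScomp, hSgen⟩ := hcg
  set V : Set G := (S ∪ S⁻¹ ∪ U) * U ∪ ((S ∪ S⁻¹ ∪ U) * U)⁻¹ with hVdef
  have hVo : IsOpen V := (hUopen.mul_left).union (hUopen.mul_left.inv)
  have hVc : IsCompact V :=
    (((hScomp.union hScomp.inv).union hUcomp).mul hUcomp).union
      (((hScomp.union hScomp.inv).union hUcomp).mul hUcomp).inv
  have h1SU : (1 : G) ∈ (S ∪ S⁻¹ ∪ (U : Set G)) * U := by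
    have h1 : (1 : G) ∈ S ∪ S⁻¹ ∪ (U : Set G) := Set.mem_union_right _ U.one_mem
    simpa using Set.mul_mem_mul h1 (U.one_mem : (1 : G) ∈ (U : Set G))
  have hV1 : (1 : G) ∈ V := Set.mem_union_left _ h1SU
  have hVs : V⁻¹ = V := by
    rw [hVdef, Set.union_inv, inv_inv, Set.union_comm]
  have hVg : Subgroup.closure V = ⊤ := by
    have hSV : S ⊆ V := fun s hs => Set.mem_union_left _
      ⟨s, Set.mem_union_left _ (Set.mem_union_left _ hs), 1, U.one_mem, mul_one s⟩
    have := Subgroup.closure_mono hSV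
    rw [hSgen] at this
    exact eq_top_iff.mpr this
  set P : Set (Subgroup G) := {N | N.Normal ∧ IsClosed (N : Set G) ∧ ¬ CompactSpace (G ⧸ N)}
    with hPdef
  have hbot : (⊥ : Subgroup G) ∈ P := by
    refine ⟨inferInstance, by rw [Subgroup.coe_bot]; exact isClosed_singleton, ?_⟩
    intro h
    obtain ⟨k, hk⟩ := (JNC.compactSpace_quotient_iff hVo hVc hV1 hVs hVg ⊥).mp h
    rw [Subgroup.coe_bot, Set.singleton_one, mul_one] at hk
    have hk' : V ^ k = Set.univ := hk
    exact hnc ⟨hk' ▸ JNC.isCompact_pow hVc k⟩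
  have hzorn : ∀ c ⊆ P, IsChain (· ≤ ·) c → ∃ ub ∈ P, ∀ z ∈ c, z ≤ ub := by
    intro c hcP hchain
    rcases c.eq_empty_or_nonempty with rfl | hcne
    · exact ⟨⊥, hbot, fun z hz => absurd hz (Set.notMem_empty z)⟩
    set D := sSup c with hDdef
    have hDmem : ∀ {x : G}, x ∈ D ↔ ∃ N ∈ c, x ∈ N := fun {x} =>
      Subgroup.mem_sSup_of_directedOn hcne hchain.directedOn
    have hDnormal : D.Normal := by
      constructor
      intro n hn g
      obtain ⟨N, hNc, hnN⟩ := hDmem.mp hn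
      exact hDmem.mpr ⟨N, hNc, (hcP hNc).1.conj_mem n hnN g⟩
    set M := D.topologicalClosure with hMdef
    have hMnormal : M.Normal := by
      haveI := hDnormal
      exact Subgroup.is_normal_topologicalClosure D
    refine ⟨M, ⟨hMnormal, D.isClosed_topologicalClosure, ?_⟩,
      fun N hNc => le_trans (le_sSup hNc) D.le_topologicalClosure⟩
    intro hcompact
    obtain ⟨k, hk⟩ := (JNC.compactSpace_quotient_iff hVo hVc hV1 hVs hVg M).mp hcompact
    -- M ⊆ D * V
    have hMD : (M : Set G) ⊆ (D : Set G) * V := by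
      intro m hm
      have hm' : m ∈ closure (D : Set G) := by
        rw [← Subgroup.topologicalClosure_coe]; exact hm
      have hopen : IsOpen ({m} * V) := hVo.mul_left
      have hmem : m ∈ {m} * V := ⟨m, rfl, 1, hV1, mul_one m⟩
      obtain ⟨d, hdo, hdD⟩ := (mem_closure_iff.mp hm' ({m} * V) hopen hmem)
      obtain ⟨m', hm'', v, hv, rfl⟩ := hdo
      rcases hm'' with rfl
      have hvinv : v⁻¹ ∈ V := by rw [← hVs]; exact Set.inv_mem_inv.mpr hv
      exact ⟨m' * v, hdD, v⁻¹, hvinv, by group⟩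
    have huniv : (Set.univ : Set G) ⊆ V ^ (k + 1) * (D : Set G) := by
      calc (Set.univ : Set G) = V ^ k * (M : Set G) := hk.symm
        _ ⊆ V ^ k * ((D : Set G) * V) := Set.mul_subset_mul_left hMD
        _ = V ^ k * (V * (D : Set G)) := by rw [JNC.normal_comm hDnormal V]
        _ = V ^ (k + 1) * (D : Set G) := by rw [← mul_assoc, ← pow_succ]
    have hcover : V ^ (k + 2) ⊆ ⋃ N : c, V ^ (k + 1) * ((N : Subgroup G) : Set G) := by
      intro x hx
      obtain ⟨v, hv, d, hd, rfl⟩ := huniv (Set.mem_univ x)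
      obtain ⟨N, hNc, hdN⟩ := hDmem.mp hd
      exact Set.mem_iUnion.mpr ⟨⟨N, hNc⟩, v, hv, d, hdN, rfl⟩
    haveI : Nonempty c := hcne.to_subtype
    obtain ⟨⟨N, hNc⟩, hsub⟩ := (JNC.isCompact_pow hVc (k + 2)).elim_directed_cover
      (fun N : c => V ^ (k + 1) * ((N : Subgroup G) : Set G))
      (fun N => IsOpen.mul_right (by rw [pow_succ]; exact hVo.mul_left))
      hcover
      (fun i j => by
        rcases eq_or_ne i j with rfl | hne
        · exact ⟨i, subset_rfl, subset_rfl⟩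
        rcases hchain i.2 j.2 (Subtype.coe_injective.ne hne) with h | h
        · exact ⟨j, Set.mul_subset_mul_left (SetLike.coe_subset_coe.mpr h), subset_rfl⟩
        · exact ⟨i, subset_rfl, Set.mul_subset_mul_left (SetLike.coe_subset_coe.mpr h)⟩)
    have hNnormal : (N : Subgroup G).Normal := (hcP hNc).1
    have hind : ∀ j, V ^ (k + 1 + j) ⊆ V ^ (k + 1) * (N : Set G) := by
      intro j
      induction j with
      | zero => exact fun x hx => ⟨x, hx, 1, N.one_mem, mul_one x⟩
      | succ j ih =>
          have hstep : V ^ (k + 1 + (j + 1)) = V ^ (k + 1 + j) * V := by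
            have h' : k + 1 + (j + 1) = (k + 1 + j) + 1 := by omega
            rw [h', pow_succ]
          rw [hstep]
          calc V ^ (k + 1 + j) * V
              ⊆ (V ^ (k + 1) * (N : Set G)) * V := Set.mul_subset_mul_right ih
            _ = V ^ (k + 1) * ((N : Set G) * V) := mul_assoc _ _ _
            _ = V ^ (k + 1) * (V * (N : Set G)) := by rw [JNC.normal_comm hNnormal V]
            _ = V ^ (k + 2) * (N : Set G) := by rw [← mul_assoc, ← pow_succ]
            _ ⊆ (V ^ (k + 1) * (N : Set G)) * (N : Set G) := Set.mul_subset_mul_right hsub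
            _ = V ^ (k + 1) * ((N : Set G) * (N : Set G)) := mul_assoc _ _ _
            _ = V ^ (k + 1) * (N : Set G) := by rw [JNC.coe_mul_coe_self]
    have hNuniv : V ^ (k + 1) * (N : Set G) = Set.univ := by
      refine Set.eq_univ_of_forall fun g => ?_
      obtain ⟨j, hj⟩ := JNC.exists_mem_pow hV1 hVs hVg g
      rcases le_or_gt j (k + 1) with h | h
      · exact ⟨g, Set.pow_subset_pow_right hV1 h hj, 1, N.one_mem, mul_one g⟩
      · have hjeq : j = k + 1 + (j - (k + 1)) := by omega
        exact hind (j - (k + 1)) (by rw [← hjeq]; exact hj)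
    exact (hcP hNc).2.2
      ((JNC.compactSpace_quotient_iff hVo hVc hV1 hVs hVg N).mpr ⟨k + 1, hNuniv⟩)
  obtain ⟨N, hNmax⟩ := zorn_le₀ P hzorn
  -- conclusion from the maximal element
  obtain ⟨hNnormal, hNclosed, hNnc⟩ := hNmax.prop
  refine ⟨N, hNnormal, hNclosed, hNnc, ?_⟩
  haveI := hNnormal
  intro K hKnormal hKclosed hKne
  haveI := hKnormal
  set N' : Subgroup G := K.comap (QuotientGroup.mk' N) with hN'def
  have hN'normal : N'.Normal := hKnormal.comap (QuotientGroup.mk' N)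
  have hN'closed : IsClosed (N' : Set G) := by
    have : (N' : Set G) = (QuotientGroup.mk : G → G ⧸ N) ⁻¹' (K : Set (G ⧸ N)) := rfl
    rw [this]
    exact hKclosed.preimage QuotientGroup.continuous_mk
  have hNleN' : N ≤ N' := by
    intro n hn
    show QuotientGroup.mk' N n ∈ K
    have : (QuotientGroup.mk' N) n = 1 := (QuotientGroup.eq_one_iff n).mpr hn
    rw [this]
    exact K.one_mem
  obtain ⟨⟨x, hxK⟩, hxne⟩ := Subgroup.ne_bot_iff_exists_ne_one.mp hKne
  have hx1 : x ≠ 1 := by simpa [Subtype.ext_iff] using hxne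
  obtain ⟨g, rfl⟩ := QuotientGroup.mk_surjective x
  have hgN' : g ∈ N' := by
    simpa [hN'def, Subgroup.mem_comap] using hxK
  have hgN : g ∉ N := fun h => hx1 ((QuotientGroup.eq_one_iff g).mpr h)
  have hN'P : N' ∉ P := fun hmem => hgN (hNmax.2 hmem hNleN' hgN')
  have hN'compact : CompactSpace (G ⧸ N') := by
    by_contra h
    exact hN'P ⟨hN'normal, hN'closed, h⟩
  obtain ⟨k, hk⟩ := (JNC.compactSpace_quotient_iff hVo hVc hV1 hVs hVg N').mp hN'compact
  set π : G → (G ⧸ N) ⧸ K := fun g => ((g : G ⧸ N) : (G ⧸ N) ⧸ K) with hπdef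
  have hπcont : Continuous π := QuotientGroup.continuous_mk.comp QuotientGroup.continuous_mk
  have hπsurj : Function.Surjective π :=
    QuotientGroup.mk_surjective.comp QuotientGroup.mk_surjective
  have himg : π '' (V ^ k) = Set.univ := by
    refine Set.eq_univ_of_forall fun y => ?_
    obtain ⟨g, rfl⟩ := hπsurj y
    have hg : g ∈ V ^ k * (N' : Set G) := hk ▸ Set.mem_univ g
    obtain ⟨v, hv, n, hn, rfl⟩ := hg
    refine ⟨v, hv, ?_⟩
    have hnK : ((n : G ⧸ N)) ∈ K := hn
    show ((v : G ⧸ N) : (G ⧸ N) ⧸ K) = (((v * n : G) : G ⧸ N) : (G ⧸ N) ⧸ K)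
    have : ((v * n : G) : G ⧸ N) = (v : G ⧸ N) * (n : G ⧸ N) := rfl
    rw [this]
    exact (QuotientGroup.eq.mpr (by simpa using K.inv_mem hnK)).symm
  exact ⟨himg ▸ (JNC.isCompact_pow hVc k).image hπcont⟩
end
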